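/- Let I₁, I₂, J be finite index sets and A ∈ ℝ^{I₁×I₂×J}. Suppose the matricization M₁₂(A) ∈ ℝ^{(I₁×I₂)×J} (rows indexed by (a,b), columns by c, entry A_{a,b,c}) factors as M₁₂(A) = U Vᵀ, where V ∈ ℝ^{J×k} and U ∈ ℝ^{(I₁×I₂)×k} is the transfer combination of (U₁, U₂) by B ∈ ℝ^{k×k₁×k₂} with U₂ ∈ ℝ^{I₂×k₂} having orthonormal columns. Define V₁ ∈ ℝ^{(I₂×J)×k₁} by (V₁)_{(b,c),p} = Σ_{i=1}^{k} Σ_{ℓ=1}^{k₂} B_{i,p,ℓ} (U₂)_{b,ℓ} V_{c,i}. Then the matricization M₁(A) ∈ ℝ^{I₁×(I₂×J)} (rows indexed by a, columns by (b,c), entry A_{a,b,c}) satisfies M₁(A) = U₁ V₁ᵀ, and the Gram matrix of V₁ is given by (V₁ᵀ V₁)_{p,q} = Σ_{i₁=1}^{k} Σ_{i₂=1}^{k} Σ_{ℓ=1}^{k₂} B_{i₁,p,ℓ} (Vᵀ V)_{i₁,i₂} B_{i₂,q,ℓ}. -/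

import Mathlib

open Matrix BigOperators

/-- the recursion passing the Gram matrices `B̂_t = V_tᵀ V_t`
from a node to its first son in the Hierarchical SVD. -/
theorem hsvd_gram_recursion
    {ι₁ ι₂ J : Type*} [Fintype ι₁] [Fintype ι₂] [Fintype J]
    {k k₁ k₂ : ℕ}
    (A : ι₁ → ι₂ → J → ℝ)
    (U₁ : Matrix ι₁ (Fin k₁) ℝ) (U₂ : Matrix ι₂ (Fin k₂) ℝ)
    (hU₂ : U₂ᵀ * U₂ = 1)
    (B : Fin k → Fin k₁ → Fin k₂ → ℝ)
    (U : Matrix (ι₁ × ι₂) (Fin k) ℝ)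
    (hU : ∀ (a : ι₁) (b : ι₂) (i : Fin k),
      U (a, b) i = ∑ j, ∑ ℓ, B i j ℓ * U₁ a j * U₂ b ℓ)
    (V : Matrix J (Fin k) ℝ)
    (hfact : ∀ (a : ι₁) (b : ι₂) (c : J),
      A a b c = ∑ i, U (a, b) i * V c i)
    (V₁ : Matrix (ι₂ × J) (Fin k₁) ℝ)
    (hV₁ : ∀ (b : ι₂) (c : J) (p : Fin k₁),
      V₁ (b, c) p = ∑ i, ∑ ℓ, B i p ℓ * U₂ b ℓ * V c i) :
    (∀ (a : ι₁) (b : ι₂) (c : J), A a b c = ∑ p, U₁ a p * V₁ (b, c) p) ∧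
      ∀ (p q : Fin k₁),
        (V₁ᵀ * V₁) p q =
          ∑ i₁, ∑ i₂, ∑ ℓ, B i₁ p ℓ * (Vᵀ * V) i₁ i₂ * B i₂ q ℓ := by
  have key : ∀ ℓ₁ ℓ₂ : Fin k₂,
      ∑ b, U₂ b ℓ₁ * U₂ b ℓ₂ = if ℓ₁ = ℓ₂ then (1:ℝ) else 0 := by
    intro ℓ₁ ℓ₂
    have := congrFun (congrFun hU₂ ℓ₁) ℓ₂
    simpa [Matrix.mul_apply, Matrix.one_apply, Matrix.transpose_apply] using this
  constructor
  · intro a b c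
    rw [hfact]
    simp_rw [hU, hV₁, Finset.sum_mul, Finset.mul_sum]
    rw [Finset.sum_comm]
    exact Finset.sum_congr rfl fun j _ => Finset.sum_congr rfl fun i _ =>
      Finset.sum_congr rfl fun ℓ _ => by ring
  · set K : Matrix (ι₂ × J) (Fin k × Fin k₂) ℝ := fun x y => U₂ x.1 y.2 * V x.2 y.1 with hK
    set C : Matrix (Fin k × Fin k₂) (Fin k₁) ℝ := fun y p => B y.1 p y.2 with hC
    have hV₁K : V₁ = K * C := by
      ext ⟨b, c⟩ p
      rw [hV₁, Matrix.mul_apply, Fintype.sum_prod_type]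
      exact Finset.sum_congr rfl fun i _ => Finset.sum_congr rfl fun ℓ _ => by
        simp [hK, hC]; ring
    have hKtK : Kᵀ * K =
        fun y₁ y₂ => (if y₁.2 = y₂.2 then (1:ℝ) else 0) * (Vᵀ * V) y₁.1 y₂.1 := by
      ext ⟨i₁, ℓ₁⟩ ⟨i₂, ℓ₂⟩
      simp only [Matrix.mul_apply, Matrix.transpose_apply]
      simp only [hK]
      rw [Fintype.sum_prod_type]
      have : ∑ b, ∑ c, (U₂ b ℓ₁ * V c i₁) * (U₂ b ℓ₂ * V c i₂)
          = (∑ b, U₂ b ℓ₁ * U₂ b ℓ₂) * (∑ c, V c i₁ * V c i₂) := by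
        rw [Finset.sum_mul_sum]
        exact Finset.sum_congr rfl fun b _ => Finset.sum_congr rfl fun c _ => by ring
      rw [this, key]
    intro p q
    have expand : V₁ᵀ * V₁ = Cᵀ * ((Kᵀ * K) * C) := by
      rw [hV₁K, Matrix.transpose_mul, Matrix.mul_assoc, Matrix.mul_assoc]
    rw [expand, hKtK]
    simp only [Matrix.mul_apply, Matrix.transpose_apply]
    rw [Fintype.sum_prod_type]
    simp only [hC]
    erw [Finset.sum_congr rfl fun x _ => Finset.sum_congr rfl fun y _ => congrArg (B x p y * ·) (Matrix.mul_apply (M := fun (y₁ y₂ : Fin k × Fin k₂) => (if y₁.2 = y₂.2 then (1:ℝ) else 0) * ∑ j, V j y₁.1 * V j y₂.1))]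
    simp_rw [Fintype.sum_prod_type]
    -- LHS: ∑ i₁, ∑ ℓ₁, C (i₁,ℓ₁) p * ∑ i₂, ∑ ℓ₂, (if ℓ₁ = ℓ₂ then 1 else 0) * (VᵀV) i₁ i₂ * C (i₂,ℓ₂) q
    simp only [hC, ite_mul, one_mul, zero_mul]
    simp_rw [Finset.sum_ite_eq, Finset.mem_univ, if_true, Finset.mul_sum]
    refine Finset.sum_congr rfl fun i₁ _ => ?_
    rw [Finset.sum_comm]
    exact Finset.sum_congr rfl fun i₂ _ =>
      Finset.sum_congr rfl fun ℓ _ => by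
        simp only [Finset.mul_sum, Finset.sum_mul]
        exact Finset.sum_congr rfl fun x _ => by ring
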